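/- For the ergodic symmetric measure $\mu$ on constrained configurations, if almost surely there are no infinite contours, then almost surely there are no infinite clusters. -/

import Mathlib

open MeasureTheory

/-- Two vertices are in the same cluster of the site configuration `ω` if they are joined
by a walk all of whose vertices carry the same state. -/
def sameCluster {V : Type*} (G : SimpleGraph V) (ω : V → Bool) (x y : V) : Prop :=
  ∃ w : G.Walk x y, ∀ v ∈ w.support, ω v = ω x

/-- The cluster of a vertex `x` in the site configuration `ω`. -/
def clusterOf {V : Type*} (G : SimpleGraph V) (ω : V → Bool) (x : V) : Set V :=
  {y | sameCluster G ω x y}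

/-- `x` lies in an infinite cluster of state `b`. -/
def inInfiniteCluster {V : Type*} (G : SimpleGraph V) (ω : V → Bool) (b : Bool)
    (x : V) : Prop :=
  ω x = b ∧ (clusterOf G ω x).Infinite

-- flip doesn't change clusters
lemma clusterOf_flip {V : Type*} (G : SimpleGraph V) (ω : V → Bool) (x : V) :
    clusterOf G (fun v => !(ω v)) x = clusterOf G ω x := by
  ext y
  constructor <;> rintro ⟨w, hw⟩ <;> exact ⟨w, fun v hv => by
    have := hw v hv
    simpa using this⟩

-- automorphism invariance lemma
lemma inf_cluster_comp {V : Type*} (G : SimpleGraph V) (ω : V → Bool) (b : Bool)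
    (g : G ≃g G) (h : ∃ x, inInfiniteCluster G ω b x) :
    ∃ x, inInfiniteCluster G (ω ∘ ⇑g) b x := by
  obtain ⟨x, hxb, hxinf⟩ := h
  refine ⟨g.symm x, ?_, ?_⟩
  · simpa using hxb
  · have hsub : (⇑g.symm) '' (clusterOf G ω x) ⊆ clusterOf G (ω ∘ ⇑g) (g.symm x) := by
      rintro _ ⟨y, ⟨w, hw⟩, rfl⟩
      refine ⟨(w.map (g.symm : G →g G)).copy rfl rfl, ?_⟩
      intro v hv
      rw [SimpleGraph.Walk.support_copy, SimpleGraph.Walk.support_map] at hv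
      obtain ⟨u, hu, rfl⟩ := List.mem_map.mp hv
      have := hw u hu
      simpa using this
    exact (hxinf.image (g.symm.injective.injOn)).mono hsub

/-- For an ergodic, `0`-`1`-symmetric measure `μ` on constrained
configurations: assuming the combinatorial fact (Lemma io) that coexistence of an
infinite 0-cluster and an infinite 1-cluster forces an infinite contour, if `μ`-a.s.
there are no infinite contours then `μ`-a.s. there are no infinite clusters. -/
theorem no_infinite_contours_implies_no_infinite_clusters {V : Type*} (G : SimpleGraph V)
    (hasInfiniteContour : (V → Bool) → Prop)
    (hio : ∀ ω : V → Bool, (∃ x, inInfiniteCluster G ω false x) →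
      (∃ x, inInfiniteCluster G ω true x) → hasInfiniteContour ω)
    (μ : Measure (V → Bool)) [IsProbabilityMeasure μ]
    (herg : ∀ A : Set (V → Bool), MeasurableSet A →
      (∀ g : G ≃g G, (fun ω => ω ∘ ⇑g) ⁻¹' A = A) → μ A = 0 ∨ μ A = 1)
    (hflip : μ.map (fun ω v => !(ω v)) = μ)
    (hmeas : ∀ b : Bool, MeasurableSet {ω : V → Bool | ∃ x, inInfiniteCluster G ω b x})
    (hnocontour : μ {ω | hasInfiniteContour ω} = 0) :
    μ {ω | ∃ b x, inInfiniteCluster G ω b x} = 0 := by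
  set A : Bool → Set (V → Bool) := fun b => {ω | ∃ x, inInfiniteCluster G ω b x} with hA
  -- flip relation
  have hflipset : ∀ b, (fun ω v => !(ω v)) ⁻¹' A b = A (!b) := by
    intro b
    ext ω
    simp only [Set.mem_preimage, hA, Set.mem_setOf_eq, inInfiniteCluster, clusterOf_flip]
    constructor <;> rintro ⟨x, hx, hinf⟩ <;> exact ⟨x, by simp [← hx], hinf⟩
  have hflipmeas : Measurable (fun (ω : V → Bool) v => !(ω v)) :=
    measurable_pi_lambda _ fun v => (measurable_of_countable Bool.not).comp (measurable_pi_apply v)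
  have heq : μ (A true) = μ (A false) := by
    calc μ (A true) = μ ((fun ω v => !(ω v)) ⁻¹' A true) := by
          conv_lhs => rw [← hflip]
          rw [Measure.map_apply hflipmeas (hmeas true)]
      _ = μ (A false) := by rw [hflipset]; norm_num
  -- invariance of A b
  have hinv : ∀ b, ∀ g : G ≃g G, (fun ω => ω ∘ ⇑g) ⁻¹' A b = A b := by
    intro b g
    ext ω
    simp only [Set.mem_preimage, hA, Set.mem_setOf_eq]
    constructor
    · intro h
      have h2 := inf_cluster_comp G (ω ∘ ⇑g) b g.symm h
      have : (ω ∘ ⇑g) ∘ ⇑g.symm = ω := by ext v; simp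
      rwa [this] at h2
    · intro h
      exact inf_cluster_comp G ω b g h
  -- intersection has measure 0
  have hinter : μ (A false ∩ A true) = 0 := by
    refine measure_mono_null ?_ hnocontour
    rintro ω ⟨h0, h1⟩
    exact hio ω h0 h1
  -- ergodicity on A false
  have hAf : μ (A false) = 0 := by
    rcases herg (A false) (hmeas false) (hinv false) with h | h
    · exact h
    · exfalso
      have h1 : μ (A true) = 1 := heq.trans h
      have := measure_union_add_inter (μ := μ) (A false) (hmeas true)
      rw [hinter, h, h1, add_zero] at this
      have hle : μ (A false ∪ A true) ≤ 1 := prob_le_one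
      rw [this] at hle
      norm_num at hle
  have hAt : μ (A true) = 0 := heq.trans hAf
  have : {ω : V → Bool | ∃ b x, inInfiniteCluster G ω b x} = A false ∪ A true := by
    ext ω
    simp only [hA, Set.mem_setOf_eq, Set.mem_union]
    constructor
    · rintro ⟨b, hb⟩; cases b
      · exact Or.inl hb
      · exact Or.inr hb
    · rintro (h | h)
      · exact ⟨false, h⟩
      · exact ⟨true, h⟩
  rw [this]
  exact le_antisymm ((measure_union_le _ _).trans (by rw [hAf, hAt]; norm_num)) zero_le'
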